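/- arXiv:math/0606215 — 2 statements merged into one kernel-verified Lean document; each statement's English description precedes it below -/
import Mathlib

section
/- Let n ≥ 1 be an integer, let q be a real number with 0 < q < 1, and let ν ∈ Λ_n be a partition with ν_n > 0. Then 𝔰_ν(q^{2(ν+δ)}; q²) = q^{2|ν| − 2n} · 𝔰_{1^n}(q^{2(ν+δ)}; q²) · 𝔰_{ν−1^n}(q^{2((ν−1^n)+δ)}; q²), where 1^n denotes the partition (1, 1, …, 1) ∈ Λ_n and ν − 1^n = (ν_1 − 1, …, ν_n − 1). -/
open BigOperators Finset

section Helpers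

open Polynomial

private lemma revprod_aux (n : ℕ) (v : Fin n → ℝ) :
    (∏ i : Fin n, ∏ j ∈ Ioi i, (v j.rev - v i.rev)) = ∏ i : Fin n, ∏ j ∈ Ioi i, (v i - v j) := by
  rw [Finset.prod_sigma', Finset.prod_sigma']
  refine Finset.prod_nbij' (fun p => ⟨p.2.rev, p.1.rev⟩) (fun p => ⟨p.2.rev, p.1.rev⟩)
      ?_ ?_ ?_ ?_ ?_ <;>
    rintro ⟨a, b⟩ hab <;>
    simp only [Finset.mem_sigma, Finset.mem_univ, Finset.mem_Ioi, true_and] at * <;>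
    simp [Fin.rev_lt_rev, hab]

/-- Determinant of a matrix whose `j`-th column is a monic polynomial of degree `n-1-j`
evaluated at `x i` equals the (decreasing) Vandermonde product. -/
private lemma detMono_aux (n : ℕ) (x : Fin n → ℝ) (p : Fin n → ℝ[X]) (hm : ∀ j, (p j).Monic)
    (hd : ∀ j : Fin n, (p j).natDegree = n - 1 - (j : ℕ)) :
    Matrix.det (Matrix.of fun i j => (p j).eval (x i)) =
      ∏ i : Fin n, ∏ j ∈ Ioi i, (x i - x j) := by
  have h1 : Matrix.det (Matrix.of fun i j => (p j).eval (x i)) =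
      Matrix.det ((Matrix.of fun i j => (p j).eval (x i)).submatrix Fin.revPerm Fin.revPerm) :=
    (Matrix.det_submatrix_equiv_self _ _).symm
  rw [h1]
  have h2 : ((Matrix.of fun i j => (p j).eval (x i)).submatrix Fin.revPerm Fin.revPerm) =
      Matrix.of fun i j => ((fun j : Fin n => p j.rev) j).eval ((x ∘ Fin.rev) i) := rfl
  rw [h2, ← Matrix.det_eval_matrixOfPolynomials_eq_det_vandermonde (x ∘ Fin.rev)
      (fun j => p j.rev)
      (fun j => by
        rw [hd j.rev]
        have hr : (j.rev : ℕ) = n - 1 - (j : ℕ) := by rw [Fin.val_rev]; omega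
        have hj := j.2; omega)
      (fun j => hm j.rev)]
  rw [Matrix.det_vandermonde, ← revprod_aux n x]
  exact Finset.prod_congr rfl fun i _ => Finset.prod_congr rfl fun j _ => by simp

private lemma det_scale_aux (n : ℕ) (r s : Fin n → ℝ) (M : Matrix (Fin n) (Fin n) ℝ) :
    Matrix.det (Matrix.of fun i j => r i * s j * M i j) =
      (∏ i, r i) * (∏ j, s j) * M.det := by
  have h : (Matrix.of fun i j => r i * s j * M i j) =
      (Matrix.diagonal r) * M * (Matrix.diagonal s) := by
    ext i j
    simp [Matrix.mul_diagonal, Matrix.diagonal_mul]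
    ring
  rw [h, Matrix.det_mul, Matrix.det_mul, Matrix.det_diagonal, Matrix.det_diagonal]
  ring

end Helpers

/-- The q-factorial Schur polynomial `𝔰_ν(x; q)` evaluated at a point
`x = (x_1, …, x_n)` (with pairwise distinct coordinates):
`det( ∏_{m=0}^{ν_j+n−j−1} (x_i − q^m) ) / ∏_{i<j} (x_i − x_j)`.
Here indices are 0-based, so the number of factors in the `j`-th column
is `ν j + (n - 1 - j)`. -/
noncomputable def qfactSchur (n : ℕ) (q : ℝ) (ν : Fin n → ℕ) (x : Fin n → ℝ) : ℝ :=
  (Matrix.det (Matrix.of fun i j : Fin n =>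
      ∏ m ∈ Finset.range (ν j + (n - 1 - (j : ℕ))), (x i - q ^ m))) /
    ∏ i : Fin n, ∏ j ∈ Finset.Ioi i, (x i - x j)

/-- The interpolation point `q^{2(ν+δ)} = (q^{2(ν_1+n−1)}, …, q^{2ν_n})`. -/
noncomputable def qPoint (n : ℕ) (q : ℝ) (ν : Fin n → ℕ) : Fin n → ℝ :=
  fun i => q ^ (2 * (ν i + (n - 1 - (i : ℕ))))

/-- for a partition `ν ∈ Λ_n` with `ν_n > 0`,
`𝔰_ν(q^{2(ν+δ)}; q²) = q^{2|ν|−2n} · 𝔰_{1^n}(q^{2(ν+δ)}; q²) · 𝔰_{ν−1^n}(q^{2((ν−1^n)+δ)}; q²)`. -/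
theorem qfactSchur_self_factor (n : ℕ) (hn : 1 ≤ n) (q : ℝ) (hq0 : 0 < q) (hq1 : q < 1)
    (ν : Fin n → ℕ) (hν : Antitone ν) (hlast : 0 < ν ⟨n - 1, by omega⟩) :
    qfactSchur n (q ^ 2) ν (qPoint n q ν) =
      q ^ (2 * (∑ i, (ν i : ℤ)) - 2 * n) *
        qfactSchur n (q ^ 2) (fun _ => 1) (qPoint n q ν) *
        qfactSchur n (q ^ 2) (fun i => ν i - 1) (qPoint n q (fun i => ν i - 1)) := by
  classical
  set x : Fin n → ℝ := qPoint n q ν with hxdef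
  set y : Fin n → ℝ := qPoint n q (fun i => ν i - 1) with hydef
  have hq0' : (0:ℝ) < q ^ 2 := by positivity
  have hqne : q ≠ 0 := ne_of_gt hq0
  have hν1 : ∀ i, 1 ≤ ν i := by
    intro i
    have hle : i ≤ (⟨n - 1, by omega⟩ : Fin n) := by
      rw [Fin.le_def]; simp; have := i.2; omega
    exact le_trans hlast (hν hle)
  have hxy : ∀ i, x i = q ^ 2 * y i := by
    intro i
    show q ^ (2 * (ν i + (n - 1 - (i:ℕ)))) = q ^ 2 * q ^ (2 * ((ν i - 1) + (n - 1 - (i:ℕ))))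
    rw [← pow_add]
    congr 1
    have := hν1 i; omega
  -- strict monotonicity of x, hence nonvanishing Vandermonde
  have hxinj : ∀ i j : Fin n, i < j → x i < x j := by
    intro i j hij
    have hνij : ν j ≤ ν i := hν (le_of_lt hij)
    have hij' : (i:ℕ) < (j:ℕ) := hij
    have hj := j.2
    apply pow_lt_pow_right_of_lt_one₀ hq0 hq1
    omega
  have hVx : (∏ i : Fin n, ∏ j ∈ Ioi i, (x i - x j)) ≠ 0 := by
    rw [Finset.prod_ne_zero_iff]
    intro i _
    rw [Finset.prod_ne_zero_iff]
    intro j hj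
    rw [Finset.mem_Ioi] at hj
    exact sub_ne_zero.mpr (ne_of_lt (hxinj i j hj))
  -- Vandermonde scaling
  set T : ℕ := ∑ i : Fin n, (Ioi (i : Fin n)).card with hTdef
  have hV : (∏ i : Fin n, ∏ j ∈ Ioi i, (x i - x j)) =
      (q ^ 2) ^ T * ∏ i : Fin n, ∏ j ∈ Ioi i, (y i - y j) := by
    rw [hTdef, ← Finset.prod_pow_eq_pow_sum, ← Finset.prod_mul_distrib]
    apply Finset.prod_congr rfl
    intro i _
    calc ∏ j ∈ Ioi i, (x i - x j) = ∏ j ∈ Ioi i, (q ^ 2 * (y i - y j)) :=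
          Finset.prod_congr rfl fun j _ => by rw [hxy i, hxy j]; ring
      _ = (q ^ 2) ^ (Ioi i).card * ∏ j ∈ Ioi i, (y i - y j) := by
          rw [Finset.prod_mul_distrib, Finset.prod_const]
  have hVy : (∏ i : Fin n, ∏ j ∈ Ioi i, (y i - y j)) ≠ 0 := by
    intro h; apply hVx; rw [hV, h, mul_zero]
  -- numerator factorization for ν
  have entry : ∀ i j : Fin n,
      (∏ m ∈ Finset.range (ν j + (n - 1 - (j:ℕ))), (x i - (q ^ 2) ^ m)) =
        (x i - 1) * (q ^ 2) ^ ((ν j - 1) + (n - 1 - (j:ℕ))) *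
          ∏ m ∈ Finset.range ((ν j - 1) + (n - 1 - (j:ℕ))), (y i - (q ^ 2) ^ m) := by
    intro i j
    have h1 : ν j + (n - 1 - (j:ℕ)) = ((ν j - 1) + (n - 1 - (j:ℕ))) + 1 := by
      have := hν1 j; omega
    rw [h1, Finset.prod_range_succ']
    rw [show (∏ m ∈ Finset.range ((ν j - 1) + (n - 1 - (j:ℕ))), (x i - (q ^ 2) ^ (m + 1))) =
        ∏ m ∈ Finset.range ((ν j - 1) + (n - 1 - (j:ℕ))), (q ^ 2 * (y i - (q ^ 2) ^ m)) from
      Finset.prod_congr rfl fun m _ => by rw [hxy i, pow_succ]; ring]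
    rw [Finset.prod_mul_distrib, Finset.prod_const, Finset.card_range, pow_zero]
    ring
  have hdetA : Matrix.det (Matrix.of fun i j : Fin n =>
        ∏ m ∈ Finset.range (ν j + (n - 1 - (j:ℕ))), (x i - (q ^ 2) ^ m)) =
      (∏ i : Fin n, (x i - 1)) *
        (∏ j : Fin n, (q ^ 2) ^ ((ν j - 1) + (n - 1 - (j:ℕ)))) *
        Matrix.det (Matrix.of fun i j : Fin n =>
          ∏ m ∈ Finset.range ((ν j - 1) + (n - 1 - (j:ℕ))), (y i - (q ^ 2) ^ m)) := by
    rw [show (Matrix.of fun i j : Fin n =>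
        ∏ m ∈ Finset.range (ν j + (n - 1 - (j:ℕ))), (x i - (q ^ 2) ^ m)) =
        Matrix.of fun i j : Fin n => (x i - 1) * (q ^ 2) ^ ((ν j - 1) + (n - 1 - (j:ℕ))) *
          ((Matrix.of fun i j : Fin n =>
            ∏ m ∈ Finset.range ((ν j - 1) + (n - 1 - (j:ℕ))), (y i - (q ^ 2) ^ m)) i j) from by
      ext i j; exact entry i j]
    exact det_scale_aux n _ _ _
  -- numerator for 1^n
  have hdet1 : Matrix.det (Matrix.of fun i j : Fin n =>
        ∏ m ∈ Finset.range (1 + (n - 1 - (j:ℕ))), (x i - (q ^ 2) ^ m)) =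
      (∏ i : Fin n, (x i - 1)) * ∏ i : Fin n, ∏ j ∈ Ioi i, (x i - x j) := by
    set p : Fin n → Polynomial ℝ :=
      fun j => ∏ m ∈ Finset.range (n - 1 - (j:ℕ)), (Polynomial.X - Polynomial.C ((q ^ 2) ^ (m+1)))
      with hpdef
    have hm : ∀ j, (p j).Monic := fun j =>
      Polynomial.monic_prod_of_monic _ _ fun m _ => Polynomial.monic_X_sub_C _
    have hd : ∀ j : Fin n, (p j).natDegree = n - 1 - (j:ℕ) := by
      intro j
      rw [hpdef]
      rw [Polynomial.natDegree_prod_of_monic _ _ fun m _ => Polynomial.monic_X_sub_C _]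
      simp only [Polynomial.natDegree_X_sub_C, Finset.sum_const, Finset.card_range,
        smul_eq_mul, mul_one]
    have hev : ∀ i j : Fin n, (p j).eval (x i) =
        ∏ m ∈ Finset.range (n - 1 - (j:ℕ)), (x i - (q ^ 2) ^ (m+1)) := by
      intro i j
      rw [hpdef, Polynomial.eval_prod]
      exact Finset.prod_congr rfl fun m _ => by simp
    rw [show (Matrix.of fun i j : Fin n =>
        ∏ m ∈ Finset.range (1 + (n - 1 - (j:ℕ))), (x i - (q ^ 2) ^ m)) =
        Matrix.of fun i j : Fin n => (x i - 1) * (1:ℝ) *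
          ((Matrix.of fun i j : Fin n => (p j).eval (x i)) i j) from by
      ext i j
      simp only [Matrix.of_apply]
      rw [show 1 + (n - 1 - (j:ℕ)) = (n - 1 - (j:ℕ)) + 1 from by omega,
        Finset.prod_range_succ']
      simp only [Matrix.of_apply, hev i j, pow_zero, mul_one]
      ring]
    rw [det_scale_aux n _ _ _, detMono_aux n x p hm hd]
    simp
  -- sums
  have hsum : n ≤ ∑ i, ν i := by
    calc n = ∑ _i : Fin n, 1 := by simp
      _ ≤ ∑ i, ν i := Finset.sum_le_sum fun i _ => hν1 i
  have hT : T = ∑ j : Fin n, (n - 1 - (j:ℕ)) := by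
    rw [hTdef]; exact Finset.sum_congr rfl fun i _ => by rw [Fin.card_Ioi]
  have hK : (∑ j : Fin n, ((ν j - 1) + (n - 1 - (j:ℕ)))) = ((∑ i, ν i) - n) + T := by
    rw [Finset.sum_add_distrib, hT]
    congr 1
    have : (∑ j : Fin n, (ν j - 1)) + n = ∑ i, ν i := by
      rw [show (∑ i, ν i) = ∑ j : Fin n, ((ν j - 1) + 1) from
        Finset.sum_congr rfl fun j _ => by have := hν1 j; omega]
      rw [Finset.sum_add_distrib]; simp
    omega
  -- the integer power
  have hzpow : q ^ (2 * (∑ i, (ν i : ℤ)) - 2 * n) = ((q ^ 2) ^ ((∑ i, ν i) - n) : ℝ) := by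
    have h1 : (2 * (∑ i, (ν i : ℤ)) - 2 * n) = ((2 * ((∑ i, ν i) - n) : ℕ) : ℤ) := by
      push_cast [Nat.cast_sub hsum]
      ring
    rw [h1, zpow_natCast, ← pow_mul]
  -- put everything together
  show (Matrix.det (Matrix.of fun i j : Fin n =>
      ∏ m ∈ Finset.range (ν j + (n - 1 - (j:ℕ))), (x i - (q ^ 2) ^ m))) /
      (∏ i : Fin n, ∏ j ∈ Ioi i, (x i - x j)) = _
  rw [hdetA]
  rw [show (∏ j : Fin n, (q ^ 2) ^ ((ν j - 1) + (n - 1 - (j:ℕ)))) =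
      (q ^ 2) ^ (((∑ i, ν i) - n) + T) from by
    rw [Finset.prod_pow_eq_pow_sum, hK]]
  unfold qfactSchur
  rw [hzpow, hdet1, hV]
  have hcT : ((q:ℝ) ^ 2) ^ T ≠ 0 := by positivity
  field_simp
  rw [pow_add]
  ring
end

section
/- Let n ≥ 2 be an integer, let q be a real number with 0 < q < 1, and let ν ∈ Λ_n be a partition with ν_n = 0. Then 𝔰_ν(q^{2(ν+δ)}; q²) = q^{2|ν|} · 𝔰_{ν'}(q^{2(ν'+δ')}; q²), where ν' = (ν_1, …, ν_{n−1}) ∈ Λ_{n−1}, δ' = (n−2, n−3, …, 1, 0), and q^{2(ν'+δ')} denotes the point (q^{2(ν_1+n−2)}, q^{2(ν_2+n−3)}, …, q^{2ν_{n−1}}) in n−1 variables. -/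
open BigOperators Finset

lemma ioi_castSucc_eq (m : ℕ) (i : Fin (m+1)) :
    (Finset.Ioi (Fin.castSucc i) : Finset (Fin (m+2))) =
      insert (Fin.last (m+1))
        ((Finset.Ioi i).map ⟨Fin.castSucc, Fin.castSucc_injective _⟩) := by
  ext j
  simp only [mem_Ioi, mem_insert, mem_map, Function.Embedding.coeFn_mk,
    Fin.lt_def, Fin.coe_castSucc, Fin.ext_iff, Fin.val_last]
  constructor
  · intro h
    by_cases hj : (j : ℕ) = m + 1
    · exact Or.inl hj
    · exact Or.inr ⟨⟨j, by omega⟩, h, rfl⟩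
  · rintro (h | ⟨a, ha, haj⟩)
    · omega
    · omega

/-- for a partition `ν ∈ Λ_n` (with `n ≥ 2`) such that `ν_n = 0`,
`𝔰_ν(q^{2(ν+δ)}; q²) = q^{2|ν|} · 𝔰_{ν'}(q^{2(ν'+δ')}; q²)`, where
`ν' = (ν_1, …, ν_{n−1}) ∈ Λ_{n−1}`. -/
theorem qfactSchur_self_reduce (n : ℕ) (hn : 2 ≤ n) (q : ℝ) (hq0 : 0 < q) (hq1 : q < 1)
    (ν : Fin n → ℕ) (hν : Antitone ν) (hlast : ν ⟨n - 1, by omega⟩ = 0) :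
    qfactSchur n (q ^ 2) ν (qPoint n q ν) =
      q ^ (2 * ∑ i, ν i) *
        qfactSchur (n - 1) (q ^ 2) (fun i => ν (Fin.castLE (by omega) i))
          (qPoint (n - 1) q (fun i => ν (Fin.castLE (by omega) i))) := by
  obtain ⟨m, rfl⟩ : ∃ m, n = m + 2 := ⟨n - 2, by omega⟩
  have hq : q ≠ 0 := ne_of_gt hq0
  set ν' : Fin (m+1) → ℕ := fun i => ν (Fin.castSucc i) with hν'def
  have hlast' : ν (Fin.last (m+1)) = 0 := hlast
  set x : Fin (m+2) → ℝ := qPoint (m+2) q ν with hxdef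
  set x' : Fin (m+1) → ℝ := qPoint (m+1) q ν' with hx'def
  -- the matrices
  set A : Matrix (Fin (m+2)) (Fin (m+2)) ℝ :=
    Matrix.of (fun i j : Fin (m+2) =>
      ∏ m' ∈ Finset.range (ν j + (m + 2 - 1 - (j : ℕ))), (x i - (q^2) ^ m')) with hAdef
  set B : Matrix (Fin (m+1)) (Fin (m+1)) ℝ :=
    Matrix.of (fun i j : Fin (m+1) =>
      ∏ m' ∈ Finset.range (ν' j + (m - (j : ℕ))), (x' i - (q^2) ^ m')) with hBdef
  have hxlast : x (Fin.last (m+1)) = 1 := by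
    simp [hxdef, qPoint, hlast']
  have hx : ∀ i : Fin (m+1), x (Fin.castSucc i) = q^2 * x' i := by
    intro i
    have hi : (i : ℕ) ≤ m := by omega
    have h1 : 2 * (ν (Fin.castSucc i) + (m + 2 - 1 - (Fin.castSucc i : ℕ)))
        = 2 * (ν' i + (m - (i : ℕ))) + 2 := by
      simp only [hν'def, Fin.coe_castSucc]
      omega
    simp only [hxdef, hx'def, qPoint, h1, Nat.add_sub_cancel]
    rw [pow_add, mul_comm]
  -- nonvanishing facts
  have hxlt : ∀ i : Fin (m+1), q^2 * x' i < 1 := by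
    intro i
    have h1 : x' i ≤ 1 := by
      apply pow_le_one₀ hq0.le hq1.le
    have h2 : q^2 < 1 := pow_lt_one₀ hq0.le hq1 two_ne_zero
    have h3 : 0 ≤ q^2 := sq_nonneg q
    nlinarith
  have hC1ne : ∀ i : Fin (m+1), q^2 * x' i - 1 ≠ 0 := fun i => by
    have := hxlt i; intro h; nlinarith
  -- Step 1 : expand det A along the last row
  have hdetA : A.det = (A.submatrix Fin.castSucc Fin.castSucc).det := by
    rw [Matrix.det_succ_row A (Fin.last (m+1))]
    rw [Fintype.sum_eq_single (Fin.last (m+1))]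
    · have hAll : A (Fin.last (m+1)) (Fin.last (m+1)) = 1 := by
        simp [hAdef, hlast']
      rw [hAll, Fin.succAbove_last]
      have : ((-1 : ℝ)) ^ ((Fin.last (m+1) : ℕ) + (Fin.last (m+1) : ℕ)) = 1 := by
        rw [← two_mul, pow_mul]
        norm_num
      rw [this]
      ring
    · intro j hj
      have hjlt : (j : ℕ) < m + 1 := by
        have := j.isLt
        rcases lt_or_eq_of_le (Nat.lt_succ_iff.mp this) with h | h
        · exact h
        · exact absurd (Fin.ext h) hj
      have hA0 : A (Fin.last (m+1)) j = 0 := by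
        apply Finset.prod_eq_zero (Finset.mem_range.mpr (show 0 < ν j + (m + 2 - 1 - (j:ℕ)) by omega))
        simp [hxlast]
      rw [hA0]
      ring
  -- Step 2 : factor the submatrix
  have hsub : A.submatrix Fin.castSucc Fin.castSucc =
      Matrix.of (fun i j : Fin (m+1) =>
        (q^2 * x' i - 1) *
          (Matrix.of (fun i j : Fin (m+1) => (q^2) ^ (ν' j + (m - (j:ℕ))) * B i j)) i j) := by
    ext i j
    have hj : (j : ℕ) ≤ m := by omega
    have hrange : ν (Fin.castSucc j) + (m + 2 - 1 - (Fin.castSucc j : ℕ))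
        = (ν' j + (m - (j:ℕ))) + 1 := by
      simp only [hν'def, Fin.coe_castSucc]
      omega
    simp only [Matrix.submatrix_apply, hAdef, Matrix.of_apply]
    rw [hrange, Finset.prod_range_succ', hx i]
    have hfac : ∀ m' : ℕ, q^2 * x' i - (q^2) ^ (m' + 1) = q^2 * (x' i - (q^2)^m') := by
      intro m'; rw [pow_succ]; ring
    simp_rw [hfac]
    rw [Finset.prod_mul_distrib, Finset.prod_const, Finset.card_range]
    simp only [hBdef, Matrix.of_apply, pow_zero]
    ring
  have hdetsub : (A.submatrix Fin.castSucc Fin.castSucc).det =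
      (∏ i : Fin (m+1), (q^2 * x' i - 1)) *
        ((∏ j : Fin (m+1), (q^2) ^ (ν' j + (m - (j:ℕ)))) * B.det) := by
    rw [hsub, Matrix.det_mul_column, Matrix.det_mul_row]
  -- Step 3 : denominator factorization
  have hdenom : (∏ i : Fin (m+2), ∏ j ∈ Finset.Ioi i, (x i - x j)) =
      (∏ i : Fin (m+1), (q^2 * x' i - 1)) *
        ((∏ i : Fin (m+1), (q^2) ^ (Finset.Ioi i).card) *
          ∏ i : Fin (m+1), ∏ j ∈ Finset.Ioi i, (x' i - x' j)) := by
    rw [Fin.prod_univ_castSucc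
      (f := fun i : Fin (m+2) => ∏ j ∈ Finset.Ioi i, (x i - x j))]
    have hIoiLast : (Finset.Ioi (Fin.last (m+1)) : Finset (Fin (m+2))) = ∅ := by
      ext j
      simp [Fin.lt_def, Nat.lt_succ_iff, Fin.le_last]
      omega
    rw [hIoiLast]
    simp only [Finset.prod_empty, mul_one]
    have hinner : ∀ i : Fin (m+1),
        (∏ j ∈ Finset.Ioi (Fin.castSucc i), (x (Fin.castSucc i) - x j)) =
          (q^2 * x' i - 1) * ((q^2) ^ (Finset.Ioi i).card *
            ∏ j ∈ Finset.Ioi i, (x' i - x' j)) := by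
      intro i
      rw [ioi_castSucc_eq m i]
      rw [Finset.prod_insert (by
        simp only [Finset.mem_map, Function.Embedding.coeFn_mk]
        rintro ⟨a, _, ha⟩
        exact absurd (congrArg Fin.val ha) (by simp [Fin.ext_iff]; omega))]
      rw [Finset.prod_map]
      simp only [Function.Embedding.coeFn_mk]
      rw [Finset.prod_congr rfl (fun j (_ : j ∈ Finset.Ioi i) =>
        show x (Fin.castSucc i) - x (Fin.castSucc j) = q^2 * (x' i - x' j) by
          rw [hx i, hx j]; ring)]
      rw [Finset.prod_mul_distrib, Finset.prod_const, hxlast, hx i]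
    rw [Finset.prod_congr rfl (fun i _ => hinner i)]
    rw [Finset.prod_mul_distrib, Finset.prod_mul_distrib]
  -- Step 4 : power counting and assembly
  have hsum : ∑ i : Fin (m+2), ν i = ∑ i : Fin (m+1), ν' i := by
    rw [Fin.sum_univ_castSucc, hlast', add_zero]
  have hcard : ∀ i : Fin (m+1), (Finset.Ioi i).card = m - (i:ℕ) := by
    intro i
    rw [Fin.card_Ioi]
    omega
  have hC2 : (∏ j : Fin (m+1), (q^2) ^ (ν' j + (m - (j:ℕ))))
      = q ^ (2 * ∑ i : Fin (m+2), ν i) *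
          ∏ i : Fin (m+1), (q^2) ^ (Finset.Ioi i).card := by
    rw [Finset.prod_pow_eq_pow_sum, Finset.prod_pow_eq_pow_sum, hsum, pow_mul,
      ← pow_add, Finset.sum_add_distrib]
    congr 2
    exact Finset.sum_congr rfl (fun i _ => (hcard i).symm)
  have hC1prodne : (∏ i : Fin (m+1), (q^2 * x' i - 1)) ≠ 0 :=
    Finset.prod_ne_zero_iff.mpr (fun i _ => hC1ne i)
  have hC3ne : (∏ i : Fin (m+1), (q^2) ^ (Finset.Ioi i).card) ≠ 0 :=
    Finset.prod_ne_zero_iff.mpr (fun i _ => pow_ne_zero _ (pow_ne_zero 2 hq))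
  show A.det / (∏ i : Fin (m+2), ∏ j ∈ Finset.Ioi i, (x i - x j))
      = q ^ (2 * ∑ i : Fin (m+2), ν i) *
        (B.det / ∏ i : Fin (m+1), ∏ j ∈ Finset.Ioi i, (x' i - x' j))
  rw [hdetA, hdetsub, hdenom, hC2]
  set C1 := ∏ i : Fin (m+1), (q^2 * x' i - 1)
  set C3 := ∏ i : Fin (m+1), (q^2) ^ (Finset.Ioi i).card
  set V' := ∏ i : Fin (m+1), ∏ j ∈ Finset.Ioi i, (x' i - x' j)
  set c := q ^ (2 * ∑ i : Fin (m+2), ν i)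
  rw [show C1 * ((c * C3) * B.det) = (C1 * C3) * (c * B.det) by ring,
    show C1 * (C3 * V') = (C1 * C3) * V' by ring,
    mul_div_mul_left _ _ (mul_ne_zero hC1prodne hC3ne), mul_div_assoc]
end
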